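/- For the numeral system defined by 0̃ = I and ñ = λx.(x x … x) (the variable x applied to n copies of itself, i.e. x occurs n+1 times) for n ≥ 1, the closed λ-terms S̃ = λn λx.(n x x), Z̃ = λn.(n A I I T) where A = λxλy.(y x), and P̃ = λn λx.(n U F) where U = λy.(y V I) and V = λaλbλcλd.(d a (c x)), are respectively a Successor, a Zero Test, and a Predecessor for this numeral system: (S̃ ñ) ≃β (n+1)~ for all n, (Z̃ 0̃) ≃β T and (Z̃ (n+1)~) ≃β F for all n, and (P̃ (n+1)~) ≃β ñ for all n. -/

import Mathlib

/-- Untyped λ-terms in de Bruijn notation. -/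
inductive Lam : Type
  | var : ℕ → Lam
  | app : Lam → Lam → Lam
  | lam : Lam → Lam
  deriving DecidableEq

namespace Lam

/-- Shift by one the free variables with index ≥ `d`. -/
def lift (d : ℕ) : Lam → Lam
  | var n => if n < d then var n else var (n + 1)
  | app M N => app (lift d M) (lift d N)
  | lam M => lam (lift (d + 1) M)

/-- Capture-avoiding substitution of `N` for the free variable of index `n`. -/
def subst : Lam → ℕ → Lam → Lam
  | var m, n, N => if m = n then N else if n < m then var (m - 1) else var m
  | app M₁ M₂, n, N => app (subst M₁ n N) (subst M₂ n N)
  | lam M, n, N => lam (subst M (n + 1) (lift 0 N))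

/-- One-step β-reduction (contraction of a β-redex anywhere in the term). -/
inductive Step : Lam → Lam → Prop
  | beta (M N : Lam) : Step (app (lam M) N) (subst M 0 N)
  | appL {M M' : Lam} (N : Lam) : Step M M' → Step (app M N) (app M' N)
  | appR (M : Lam) {N N' : Lam} : Step N N' → Step (app M N) (app M N')
  | lam {M M' : Lam} : Step M M' → Step (Lam.lam M) (Lam.lam M')

/-- β-equivalence: the equivalence relation generated by one-step β-reduction. -/
def BetaEq : Lam → Lam → Prop := Relation.EqvGen Step

/-- The variable of index `n` occurs free in the term. -/
def HasFree : Lam → ℕ → Prop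
  | var m, n => m = n
  | app M N, n => HasFree M n ∨ HasFree N n
  | lam M, n => HasFree M (n + 1)

/-- A term is closed if it has no free variables. -/
def Closed (M : Lam) : Prop := ∀ n, ¬ HasFree M n

/-- A term is β-normal: it contains no β-redex. -/
def IsBetaNormal : Lam → Prop
  | app (lam _) _ => False
  | app M N => IsBetaNormal M ∧ IsBetaNormal N
  | lam M => IsBetaNormal M
  | var _ => True

/-- A term is βη-normal: it contains no β-redex and no η-redex
`λx.(M x)` with `x` not free in `M`. -/
def IsBetaEtaNormal : Lam → Prop
  | app (lam _) _ => False
  | app M N => IsBetaEtaNormal M ∧ IsBetaEtaNormal N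
  | lam (app M (var 0)) => HasFree M 0 ∧ IsBetaEtaNormal (app M (var 0))
  | lam M => IsBetaEtaNormal M
  | var _ => True

/-- `I = λx.x`. -/
def I : Lam := lam (var 0)

/-- `T = λxλy.x`. -/
def T : Lam := lam (lam (var 1))

/-- `F = λxλy.y`. -/
def F : Lam := lam (lam (var 0))

/-- The pair `<M,N> = λx.(x M N)` (the binder shifts the free variables of `M,N`). -/
def pair (M N : Lam) : Lam := lam (app (app (var 0) (lift 0 M)) (lift 0 N))

end Lam

/-- `x x … x` : the variable `x` (de Bruijn index 0) applied to `n` copies of itself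
(`x` occurs `n + 1` times). -/
def Lam.selfApps : ℕ → Lam
  | 0 => Lam.var 0
  | n + 1 => Lam.app (Lam.selfApps n) (Lam.var 0)

/-- The numeral system `tilde` : `0̃ = I` and, for `n ≥ 1`, `ñ = λx.(x x … x)`
where `x` occurs `n + 1` times. -/
def Lam.tilde : ℕ → Lam
  | 0 => Lam.I
  | n + 1 => Lam.lam (Lam.selfApps (n + 1))

namespace Lam

theorem beq_step {M N : Lam} (h : Step M N) : BetaEq M N := .rel _ _ h
theorem beq_trans {M N P : Lam} (h : BetaEq M N) (h2 : BetaEq N P) : BetaEq M P := .trans _ _ _ h h2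

theorem beq_beta (M N R : Lam) (h : subst M 0 N = R) : BetaEq (app (lam M) N) R :=
  h ▸ beq_step (.beta M N)

theorem beq_appL {M M' : Lam} (N : Lam) (h : BetaEq M M') : BetaEq (app M N) (app M' N) := by
  induction h with
  | rel _ _ h => exact .rel _ _ (.appL _ h)
  | refl => exact .refl _
  | symm _ _ _ ih => exact .symm _ _ ih
  | trans _ _ _ _ _ ih1 ih2 => exact .trans _ _ _ ih1 ih2

theorem beq_appR (M : Lam) {N N' : Lam} (h : BetaEq N N') : BetaEq (app M N) (app M N') := by
  induction h with
  | rel _ _ h => exact .rel _ _ (.appR _ h)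
  | refl => exact .refl _
  | symm _ _ _ ih => exact .symm _ _ ih
  | trans _ _ _ _ _ ih1 ih2 => exact .trans _ _ _ ih1 ih2

theorem beq_lam {M M' : Lam} (h : BetaEq M M') : BetaEq (lam M) (lam M') := by
  induction h with
  | rel _ _ h => exact .rel _ _ (.lam h)
  | refl => exact .refl _
  | symm _ _ _ ih => exact .symm _ _ ih
  | trans _ _ _ _ _ ih1 ih2 => exact .trans _ _ _ ih1 ih2

def appIter (M : Lam) : ℕ → Lam
  | 0 => M
  | k+1 => app (appIter M k) M

def selfApps1 : ℕ → Lam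
  | 0 => var 1
  | k+1 => app (selfApps1 k) (var 1)

theorem tilde_eq (n : ℕ) : tilde n = lam (selfApps n) := by cases n <;> rfl

theorem lift_selfApps (d k : ℕ) : lift (d+1) (selfApps k) = selfApps k := by
  induction k with
  | zero => show lift (d+1) (var 0) = var 0; rw [lift, if_pos (Nat.succ_pos d)]
  | succ k ih => show app _ _ = _; rw [ih, lift, if_pos (Nat.succ_pos d)]; rfl

theorem lift_tilde (d n : ℕ) : lift d (tilde n) = tilde n := by
  rw [tilde_eq]; show lam (lift (d+1) (selfApps n)) = _; rw [lift_selfApps]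

theorem substSelfVar (k : ℕ) : subst (selfApps k) 0 (var 0) = selfApps k := by
  induction k with
  | zero => rfl
  | succ k ih => show app (subst (selfApps k) 0 (var 0)) _ = _; rw [ih]; rfl

theorem substSelfApp (k : ℕ) (X : Lam) : subst (selfApps k) 0 X = appIter X k := by
  induction k with
  | zero => rfl
  | succ k ih => show app (subst (selfApps k) 0 X) _ = _; rw [ih]; rfl

theorem substSelf1 (k : ℕ) (X : Lam) : subst (selfApps1 k) 0 X = selfApps k := by
  induction k with
  | zero => rfl
  | succ k ih => show app (subst (selfApps1 k) 0 X) _ = _; rw [ih]; rfl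

theorem lift0_selfApps (k : ℕ) : lift 0 (selfApps k) = selfApps1 k := by
  induction k with
  | zero => rfl
  | succ k ih => show app (lift 0 (selfApps k)) _ = _; rw [ih]; rfl

def AA : Lam := lam (lam (app (var 0) (var 1)))
def PA : Lam := lam (app (var 0) AA)
def VV : Lam := lam (lam (lam (lam (app (app (var 0) (var 3)) (app (var 1) (var 5))))))
def UU : Lam := lam (app (app (var 0) VV) I)
def V4 : Lam := lam (lam (lam (lam (app (app (var 0) (var 3)) (app (var 1) (var 4))))))
def V7 : Lam := lam (lam (lam (lam (app (app (var 0) (var 3)) (app (var 1) (var 7))))))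
def V6 : Lam := lam (lam (lam (lam (app (app (var 0) (var 3)) (app (var 1) (var 6))))))
def W3 : Lam := lam (lam (lam (app (app (var 0) V7) (app (var 1) (var 3)))))
def W2 : Lam := lam (lam (app (app (var 0) V6) (app (var 1) (var 2))))
def Qt (B : Lam) : Lam := lam (app (app (var 0) VV) B)

theorem ziter : ∀ k, BetaEq (appIter AA (k+1)) PA := by
  intro k
  induction k with
  | zero => exact beq_beta _ _ _ (by rfl)
  | succ k ih =>
    refine beq_trans (beq_appL _ ih) ?_
    refine beq_trans (beq_beta (app (var 0) AA) AA (app AA AA) (by rfl)) ?_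
    exact beq_beta _ _ _ (by rfl)

theorem piter : ∀ k, BetaEq (appIter UU (k+1)) (Qt (selfApps1 k)) := by
  intro k
  induction k with
  | zero =>
    refine beq_trans (beq_beta _ UU (app (app UU V4) I) (by rfl)) ?_
    refine beq_trans (beq_appL _ (beq_beta _ V4 (app (app V4 V4) I) (by rfl))) ?_
    refine beq_trans (beq_appL _ (beq_appL _ (beq_beta _ V4 W3 (by rfl)))) ?_
    refine beq_trans (beq_appL _ (beq_beta _ I W2 (by rfl))) ?_
    refine beq_trans (beq_beta _ I (lam (app (app (var 0) VV) (app I (var 1)))) (by rfl)) ?_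
    exact beq_lam (beq_appR _ (beq_beta (var 0) (var 1) (var 1) (by rfl)))
  | succ k ih =>
    refine beq_trans (beq_appL _ ih) ?_
    refine beq_trans (beq_beta _ UU (app (app UU V4) (selfApps k)) ?_) ?_
    · show app (app UU V4) (subst (selfApps1 k) 0 UU) = _
      rw [substSelf1]
    refine beq_trans (beq_appL _ (beq_beta _ V4 (app (app V4 V4) I) (by rfl))) ?_
    refine beq_trans (beq_appL _ (beq_appL _ (beq_beta _ V4 W3 (by rfl)))) ?_
    refine beq_trans (beq_appL _ (beq_beta _ I W2 (by rfl))) ?_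
    refine beq_beta _ (selfApps k) _ ?_
    show lam (app (app (var 0) VV) (app (lift 0 (selfApps k)) (var 1))) = _
    rw [lift0_selfApps]; rfl

end Lam

open Lam in
theorem statement7aux :
    (Lam.Closed (Lam.lam (Lam.lam (Lam.app (Lam.app (Lam.var 1) (Lam.var 0)) (Lam.var 0)))) ∧
      ∀ n, Lam.BetaEq (Lam.app (Lam.lam (Lam.lam (Lam.app (Lam.app (Lam.var 1) (Lam.var 0)) (Lam.var 0)))) (Lam.tilde n)) (Lam.tilde (n + 1))) ∧
    (Lam.Closed (Lam.lam (Lam.app (Lam.app (Lam.app (Lam.app (Lam.var 0) (Lam.lam (Lam.lam (Lam.app (Lam.var 0) (Lam.var 1))))) Lam.I) Lam.I) Lam.T)) ∧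
      Lam.BetaEq (Lam.app (Lam.lam (Lam.app (Lam.app (Lam.app (Lam.app (Lam.var 0) (Lam.lam (Lam.lam (Lam.app (Lam.var 0) (Lam.var 1))))) Lam.I) Lam.I) Lam.T)) (Lam.tilde 0)) Lam.T ∧
      ∀ n, Lam.BetaEq (Lam.app (Lam.lam (Lam.app (Lam.app (Lam.app (Lam.app (Lam.var 0) (Lam.lam (Lam.lam (Lam.app (Lam.var 0) (Lam.var 1))))) Lam.I) Lam.I) Lam.T)) (Lam.tilde (n + 1))) Lam.F) ∧
    (Lam.Closed (Lam.lam (Lam.lam (Lam.app (Lam.app (Lam.var 1) (Lam.lam (Lam.app (Lam.app (Lam.var 0) (Lam.lam (Lam.lam (Lam.lam (Lam.lam (Lam.app (Lam.app (Lam.var 0) (Lam.var 3)) (Lam.app (Lam.var 1) (Lam.var 5)))))))) Lam.I))) Lam.F))) ∧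
      ∀ n, Lam.BetaEq (Lam.app (Lam.lam (Lam.lam (Lam.app (Lam.app (Lam.var 1) (Lam.lam (Lam.app (Lam.app (Lam.var 0) (Lam.lam (Lam.lam (Lam.lam (Lam.lam (Lam.app (Lam.app (Lam.var 0) (Lam.var 3)) (Lam.app (Lam.var 1) (Lam.var 5)))))))) Lam.I))) Lam.F))) (Lam.tilde (n + 1))) (Lam.tilde n)) := by
  refine ⟨⟨?_, ?_⟩, ⟨?_, ?_, ?_⟩, ?_, ?_⟩
  · -- Closed S
    intro n h; simp [Lam.HasFree] at h
  · -- Successor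
    intro n
    refine beq_trans (beq_beta _ (tilde n) (lam (app (app (tilde n) (var 0)) (var 0))) ?_) ?_
    · show lam (app (app (lift 0 (tilde n)) (var 0)) (var 0)) = _
      rw [lift_tilde]
    · rw [tilde_eq]
      refine beq_lam (beq_appL _ ?_)
      cases n with
      | zero => exact beq_beta (var 0) (var 0) (var 0) (by rfl)
      | succ m => exact beq_beta (selfApps (m+1)) (var 0) _ (substSelfVar _)
  · -- Closed Z
    intro n h; simp [Lam.HasFree, Lam.I, Lam.T] at h
  · -- Zero test on 0
    refine beq_trans (beq_beta _ (tilde 0) (app (app (app (app I AA) I) I) T) (by rfl)) ?_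
    refine beq_trans (beq_appL _ (beq_appL _ (beq_appL _ (beq_beta (var 0) AA AA (by rfl))))) ?_
    refine beq_trans (beq_appL _ (beq_appL _ (beq_beta _ I (lam (app (var 0) I)) (by rfl)))) ?_
    refine beq_trans (beq_appL _ (beq_beta (app (var 0) I) I (app I I) (by rfl))) ?_
    refine beq_trans (beq_appL _ (beq_beta (var 0) I I (by rfl))) ?_
    exact beq_beta (var 0) T T (by rfl)
  · -- Zero test on succ
    intro n
    refine beq_trans (beq_beta _ (tilde (n+1)) (app (app (app (app (tilde (n+1)) AA) I) I) T) (by rfl)) ?_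
    refine beq_trans (beq_appL _ (beq_appL _ (beq_appL _
      (beq_trans (beq_beta (selfApps (n+1)) AA _ (substSelfApp _ _)) (ziter n))))) ?_
    refine beq_trans (beq_appL _ (beq_appL _ (beq_beta (app (var 0) AA) I (app I AA) (by rfl)))) ?_
    refine beq_trans (beq_appL _ (beq_appL _ (beq_beta (var 0) AA AA (by rfl)))) ?_
    refine beq_trans (beq_appL _ (beq_beta _ I (lam (app (var 0) I)) (by rfl))) ?_
    refine beq_trans (beq_beta (app (var 0) I) T (app T I) (by rfl)) ?_
    exact beq_beta (lam (var 1)) I F (by rfl)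
  · -- Closed P
    intro n h; simp [Lam.HasFree, Lam.I, Lam.F] at h
  · -- Predecessor
    intro n
    refine beq_trans (beq_beta _ (tilde (n+1)) (lam (app (app (tilde (n+1)) UU) F)) ?_) ?_
    · show lam (app (app (lift 0 (tilde (n+1))) UU) F) = _
      rw [lift_tilde]
    · rw [tilde_eq n]
      refine beq_lam ?_
      refine beq_trans (beq_appL _
        (beq_trans (beq_beta (selfApps (n+1)) UU _ (substSelfApp _ _)) (piter n))) ?_
      refine beq_trans (beq_beta _ F (app (app F V4) (selfApps n)) ?_) ?_
      · show app (app F V4) (subst (selfApps1 n) 0 F) = _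
        rw [substSelf1]
      refine beq_trans (beq_appL _ (beq_beta (lam (var 0)) V4 I (by rfl))) ?_
      exact beq_beta (var 0) (selfApps n) _ (by rfl)
/-- For the numeral system `tilde` (`0̃ = I`, `ñ = λx.(x x … x)` with `x` occurring
`n+1` times), the terms `S̃ = λn λx.(n x x)`, `Z̃ = λn.(n A I I T)` with `A = λxλy.(y x)`,
and `P̃ = λn λx.(n U F)` with `U = λy.(y V I)` and `V = λaλbλcλd.(d a (c x))`, are
respectively a Successor, a Zero Test and a Predecessor. -/
theorem statement7 :
    (Lam.Closed (Lam.lam (Lam.lam (Lam.app (Lam.app (Lam.var 1) (Lam.var 0)) (Lam.var 0)))) ∧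
      ∀ n, Lam.BetaEq (Lam.app (Lam.lam (Lam.lam (Lam.app (Lam.app (Lam.var 1) (Lam.var 0)) (Lam.var 0)))) (Lam.tilde n)) (Lam.tilde (n + 1))) ∧
    (Lam.Closed (Lam.lam (Lam.app (Lam.app (Lam.app (Lam.app (Lam.var 0) (Lam.lam (Lam.lam (Lam.app (Lam.var 0) (Lam.var 1))))) Lam.I) Lam.I) Lam.T)) ∧
      Lam.BetaEq (Lam.app (Lam.lam (Lam.app (Lam.app (Lam.app (Lam.app (Lam.var 0) (Lam.lam (Lam.lam (Lam.app (Lam.var 0) (Lam.var 1))))) Lam.I) Lam.I) Lam.T)) (Lam.tilde 0)) Lam.T ∧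
      ∀ n, Lam.BetaEq (Lam.app (Lam.lam (Lam.app (Lam.app (Lam.app (Lam.app (Lam.var 0) (Lam.lam (Lam.lam (Lam.app (Lam.var 0) (Lam.var 1))))) Lam.I) Lam.I) Lam.T)) (Lam.tilde (n + 1))) Lam.F) ∧
    (Lam.Closed (Lam.lam (Lam.lam (Lam.app (Lam.app (Lam.var 1) (Lam.lam (Lam.app (Lam.app (Lam.var 0) (Lam.lam (Lam.lam (Lam.lam (Lam.lam (Lam.app (Lam.app (Lam.var 0) (Lam.var 3)) (Lam.app (Lam.var 1) (Lam.var 5)))))))) Lam.I))) Lam.F))) ∧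
      ∀ n, Lam.BetaEq (Lam.app (Lam.lam (Lam.lam (Lam.app (Lam.app (Lam.var 1) (Lam.lam (Lam.app (Lam.app (Lam.var 0) (Lam.lam (Lam.lam (Lam.lam (Lam.lam (Lam.app (Lam.app (Lam.var 0) (Lam.var 3)) (Lam.app (Lam.var 1) (Lam.var 5)))))))) Lam.I))) Lam.F))) (Lam.tilde (n + 1))) (Lam.tilde n)) :=
  statement7aux
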